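/- (Quasi-mode identity in the weak-field regime) Let b > 0, m ∈ ℤ and ν ∈ (−1/2, 1/2] with a := m − ν > 0. Define χ(r) = 1 + ((a − b/2)/(a + b/2))·r^{−2a}, f(r) = r^{a}·e^{−b·r²/4}, and Ψ = χ·f on [1,∞). Then Ψ'(1) = 0, and for every r > 1, −Ψ''(r) − Ψ'(r)/r + (a/r − b·r/2)²·Ψ(r) − b·Ψ(r) = b·r·χ'(r)·f(r). -/

import Mathlib

open MeasureTheory

/-- Quasi-mode identity in the weak-field regime: with `a = m − ν > 0`,
`χ(r) = 1 + ((a − b/2)/(a + b/2))·r^{−2a}`, `f(r) = r^a e^{−br²/4}` and `Ψ = χ f`,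
one has `Ψ'(1) = 0` and `(𝓛^{(m)} − b)Ψ = b·r·χ'·f` on `(1,∞)`. -/
theorem quasi_mode_identity
    (b : ℝ) (hb : 0 < b) (m : ℤ) (ν : ℝ) (hν : ν ∈ Set.Ioc (-(1:ℝ)/2) (1/2))
    (a : ℝ) (ha_def : a = (m : ℝ) - ν) (ha : 0 < a)
    (χ f Ψ : ℝ → ℝ)
    (hχ : ∀ r, χ r = 1 + (a - b / 2) / (a + b / 2) * r ^ (-(2 * a)))
    (hf : ∀ r, f r = r ^ a * Real.exp (-b * r ^ 2 / 4))
    (hΨ : ∀ r, Ψ r = χ r * f r) :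
    deriv Ψ 1 = 0 ∧
    ∀ r > (1:ℝ),
      -(deriv (deriv Ψ) r) - deriv Ψ r / r + (a / r - b * r / 2) ^ 2 * Ψ r - b * Ψ r
        = b * r * deriv χ r * f r := by
  set c : ℝ := (a - b / 2) / (a + b / 2) with hc
  have hab : a + b / 2 ≠ 0 := by positivity
  have hχ_fun : χ = fun r => 1 + c * r ^ (-(2 * a)) := funext hχ
  have hf_fun : f = fun r => r ^ a * Real.exp (-b * r ^ 2 / 4) := funext hf
  have hΨ_fun : Ψ = fun r => χ r * f r := funext hΨ
  -- derivative of χ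
  have hχd : ∀ r : ℝ, r ≠ 0 →
      HasDerivAt χ (c * (-(2 * a)) * r ^ (-(2 * a) - 1)) r := by
    intro r hr
    rw [hχ_fun]
    have h := ((Real.hasDerivAt_rpow_const (p := -(2 * a)) (Or.inl hr)).const_mul c).const_add 1
    refine h.congr_deriv ?_
    ring
  -- derivative of f
  have hfd : ∀ r : ℝ, 0 < r →
      HasDerivAt f ((a / r - b * r / 2) * f r) r := by
    intro r hr
    rw [hf_fun]
    have h1 : HasDerivAt (fun r : ℝ => r ^ a) (a * r ^ (a - 1)) r :=
      Real.hasDerivAt_rpow_const (Or.inl hr.ne')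
    have h2 : HasDerivAt (fun r : ℝ => -b * r ^ 2 / 4) (-b * r / 2) r := by
      have h : HasDerivAt (fun r : ℝ => r ^ 2) (2 * r) r := by
        simpa using hasDerivAt_pow 2 r
      refine ((h.const_mul (-b)).div_const 4).congr_deriv ?_
      ring
    have h3 := h1.mul h2.exp
    refine h3.congr_deriv ?_
    have hra : r ^ (a - 1) = r ^ a / r := by
      rw [Real.rpow_sub hr, Real.rpow_one]
    simp only [hra]
    field_simp
    ring
  -- derivative of Ψ
  set Φ : ℝ → ℝ := fun r =>
    (c * (-(2 * a)) * r ^ (-(2 * a) - 1) + χ r * (a / r - b * r / 2)) * f r with hΦ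
  have hΨd : ∀ r : ℝ, 0 < r → HasDerivAt Ψ (Φ r) r := by
    intro r hr
    rw [hΨ_fun]
    have h := (hχd r hr.ne').mul (hfd r hr)
    refine h.congr_deriv ?_
    simp only [hΦ]
    ring
  -- derivative of Φ
  have hG : ∀ r : ℝ, 0 < r →
      HasDerivAt (fun r : ℝ => a / r - b * r / 2) (-(a * (r ^ 2)⁻¹) - b / 2) r := by
    intro r hr
    have h1 : HasDerivAt (fun r : ℝ => a / r) (-(a * (r ^ 2)⁻¹)) r := by
      have h := (hasDerivAt_inv hr.ne').const_mul a
      simp only [div_eq_mul_inv]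
      refine h.congr_deriv ?_
      ring
    have h2 : HasDerivAt (fun r : ℝ => b * r / 2) (b / 2) r := by
      have := ((hasDerivAt_id r).const_mul b).div_const 2
      refine this.congr_deriv ?_
      ring
    exact h1.sub h2
  have hΦd : ∀ r : ℝ, 0 < r → HasDerivAt Φ
      ((c * (-(2 * a)) * ((-(2 * a) - 1) * r ^ (-(2 * a) - 1 - 1))
        + (c * (-(2 * a)) * r ^ (-(2 * a) - 1)) * (a / r - b * r / 2)
        + χ r * (-(a * (r ^ 2)⁻¹) - b / 2)) * f r
       + (c * (-(2 * a)) * r ^ (-(2 * a) - 1) + χ r * (a / r - b * r / 2))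
          * ((a / r - b * r / 2) * f r)) r := by
    intro r hr
    have ht1 : HasDerivAt (fun r : ℝ => c * (-(2 * a)) * r ^ (-(2 * a) - 1))
        (c * (-(2 * a)) * ((-(2 * a) - 1) * r ^ (-(2 * a) - 1 - 1))) r :=
      (Real.hasDerivAt_rpow_const (Or.inl hr.ne')).const_mul _
    have hB := ht1.add ((hχd r hr.ne').mul (hG r hr))
    have h := hB.mul (hfd r hr)
    refine h.congr_deriv ?_
    simp only [Pi.add_apply, Pi.mul_apply]
    ring
  refine ⟨?_, ?_⟩
  · -- Ψ'(1) = 0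
    rw [(hΨd 1 one_pos).deriv]
    simp only [hΦ, hχ 1, Real.one_rpow]
    have : c * -(2 * a) * 1 + (1 + c * 1) * (a / 1 - b * 1 / 2) = 0 := by
      rw [hc]; field_simp; ring
    rw [this, zero_mul]
  · intro r hr
    have hr0 : (0 : ℝ) < r := lt_trans one_pos hr
    have hEq : deriv Ψ =ᶠ[nhds r] Φ :=
      Filter.eventuallyEq_of_mem (isOpen_Ioi.mem_nhds (Set.mem_Ioi.mpr hr0))
        (fun x hx => (hΨd x hx).deriv)
    rw [hEq.deriv_eq, (hΦd r hr0).deriv, (hΨd r hr0).deriv, (hχd r hr0.ne').deriv,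
      hΨ r, hχ r, hf r]
    simp only [hΦ, hχ r, hf r]
    have hx1 : r ^ (-(2 * a) - 1) = r ^ (-(2 * a)) / r := by
      rw [Real.rpow_sub hr0, Real.rpow_one]
    have hx2 : r ^ (-(2 * a) - 1 - 1) = r ^ (-(2 * a)) / r / r := by
      rw [Real.rpow_sub hr0, Real.rpow_one, hx1]
    rw [hx1, hx2]
    field_simp
    ring
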